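/- The SAℓCA of a deterministic transition system need not be deterministic; concretely, there exists a deterministic transition system S with two outputs and an ℓ ≥ 2 such that some state of S_ℓ has two distinct successor states under the domino rule. -/
import Mathlib


/-- A transition system `(X, X0, E, Y, H)`. -/
structure TS (X Y : Type*) where
  init : Set X
  edge : X → X → Prop
  out : X → Y

/-- The set of `H`-long output behaviors of a transition system. -/
def BehH {X Y : Type*} (S : TS X Y) (H : ℕ) : Set (List Y) :=
  {b | ∃ r : ℕ → X, r 0 ∈ S.init ∧ (∀ k, k + 1 < H → S.edge (r k) (r (k + 1))) ∧
        b = (List.range H).map fun k => S.out (r k)}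

/-- The set of `ℓ`-long contiguous subsequences of a set of behaviors. -/
def Xell {Y : Type*} (B : Set (List Y)) (ℓ : ℕ) : Set (List Y) :=
  {σ | σ.length = ℓ ∧ ∃ b ∈ B, σ <:+: b}

/-- The (strongest asynchronous) `ℓ`-complete abstraction built from a behavior set `B`
with initial-output set `Y0`: states are `ℓ`-long subsequences, transitions follow the
domino rule, the output is the first symbol. -/
def AbsTS {Y : Type*} [Inhabited Y] (B : Set (List Y)) (Y0 : Set Y) (ℓ : ℕ) :
    TS (List Y) Y where
  init := {σ | σ ∈ Xell B ℓ ∧ ∃ y ∈ Y0, σ.head? = some y}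
  edge := fun σ σ' => σ ∈ Xell B ℓ ∧ σ' ∈ Xell B ℓ ∧ σ.tail = σ'.dropLast
  out := fun σ => σ.headI

/-- The SAℓCA of a transition system `S` for horizon `H`. -/
def SAlCA {X Y : Type*} [Inhabited Y] (S : TS X Y) (H ℓ : ℕ) : TS (List Y) Y :=
  AbsTS (BehH S H) (S.out '' S.init) ℓ

/-- `H`-long behaviors of the abstraction built from behavior set `B`: a run of
`H - ℓ + 1` abstract states (windows) flattened into `H` output symbols (the heads of
the windows followed by the tail of the last window). -/
def AbsBeh {Y : Type*} [Inhabited Y] (B : Set (List Y)) (Y0 : Set Y) (H ℓ : ℕ) :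
    Set (List Y) :=
  {b | ∃ r : ℕ → List Y, r 0 ∈ (AbsTS B Y0 ℓ).init ∧
        (∀ k, k + 1 ≤ H - ℓ → (AbsTS B Y0 ℓ).edge (r k) (r (k + 1))) ∧
        b = ((List.range (H - ℓ + 1)).map fun k => (r k).headI) ++ (r (H - ℓ)).tail}

/-- `H`-long behaviors of the SAℓCA of `S`. -/
def AbsBehH {X Y : Type*} [Inhabited Y] (S : TS X Y) (H ℓ : ℕ) : Set (List Y) :=
  AbsBeh (BehH S H) (S.out '' S.init) H ℓ

/-- Two-symbol output alphabet. -/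
inductive BSym | y0 | y1
deriving DecidableEq, Inhabited

/-- Output map: `y0` on `(1/4, 1]`, `y1` on `[0, 1/4]`. -/
noncomputable def outS (x : ℝ) : BSym := if 1 / 4 < x then .y0 else .y1

/-- The example system `x ↦ x/2` on `[0,1]`, every state initial. -/
noncomputable def halfTS : TS ℝ BSym where
  init := Set.Icc 0 1
  edge := fun x x' => x' = x / 2
  out := outS

lemma mem_beh (c : ℝ) (hc : c ∈ Set.Icc (0:ℝ) 1) :
    [outS c, outS (c / 2)] ∈ BehH halfTS 2 := by
  refine ⟨fun k => c / 2 ^ k, by simpa [halfTS] using hc, ?_, ?_⟩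
  · intro k hk
    have hk0 : k = 0 := by omega
    subst hk0
    show c / 2 ^ 1 = c / 2 ^ 0 / 2
    ring
  · simp [List.range_succ, halfTS]

/-- the SAℓCA of a deterministic transition system need not be
deterministic: some deterministic `S` with two outputs has an abstract state with two
distinct successors under the domino rule. -/
theorem stmt8 : ∃ (X : Type) (S : TS X BSym) (H ℓ : ℕ), 2 ≤ ℓ ∧ ℓ ≤ H ∧
    (∀ x x' x'' : X, S.edge x x' → S.edge x x'' → x' = x'') ∧
    ∃ σ σ' σ'' : List BSym, σ' ≠ σ'' ∧
      (SAlCA S H ℓ).edge σ σ' ∧ (SAlCA S H ℓ).edge σ σ'' := by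
  have hb1 : [BSym.y0, BSym.y0] ∈ BehH halfTS 2 := by
    have h := mem_beh 1 (by norm_num)
    have e1 : outS 1 = BSym.y0 := by norm_num [outS]
    have e2 : outS (1 / 2) = BSym.y0 := by norm_num [outS]
    rwa [e1, e2] at h
  have hb2 : [BSym.y0, BSym.y1] ∈ BehH halfTS 2 := by
    have h := mem_beh (2/5) (by norm_num)
    have e1 : outS (2/5) = BSym.y0 := by norm_num [outS]
    have e2 : outS (2/5/2) = BSym.y1 := by norm_num [outS]
    rwa [e1, e2] at h
  have hx1 : [BSym.y0, BSym.y0] ∈ Xell (BehH halfTS 2) 2 :=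
    ⟨rfl, _, hb1, List.infix_refl _⟩
  have hx2 : [BSym.y0, BSym.y1] ∈ Xell (BehH halfTS 2) 2 :=
    ⟨rfl, _, hb2, List.infix_refl _⟩
  refine ⟨ℝ, halfTS, 2, 2, le_refl 2, le_refl 2, ?_,
    [.y0, .y0], [.y0, .y0], [.y0, .y1], by simp, ⟨hx1, hx1, rfl⟩, ⟨hx1, hx2, rfl⟩⟩
  intro x x' x'' h h'
  rw [show x' = x / 2 from h, show x'' = x / 2 from h']
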